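/- Let k ≥ 4 be an even integer, p a prime, ε ∈ {+1, −1}, and ℓ a prime such that ℓ divides (ε + p^{k/2})·(ε + p^{k/2−1}). Define a(n) = σ_{k−1}(n) + ε·p^{k/2}·σ_{k−1}(n/p) for n ≥ 1, where σ_{k−1}(n/p) = 0 if p ∤ n. Then for every n ≥ 1, a(np) ≡ (1 + p^{k−1} + ε·p^{k/2})·a(n) (mod ℓ). -/

import Mathlib

/-- `mySigma m n = ∑_{d ∣ n} d^m`, the sum of `m`-th powers of the divisors of `n`. -/
def mySigma (m n : ℕ) : ℕ := ∑ d ∈ n.divisors, d ^ m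

/-- `frak k p ε n = σ_{k-1}(n) + ε p^{k/2} σ_{k-1}(n/p)`, where the last term is `0`
if `p ∤ n`. -/
def frak (k p : ℕ) (ε : ℤ) (n : ℕ) : ℤ :=
  (mySigma (k - 1) n : ℤ) +
    ε * (p : ℤ) ^ (k / 2) * (if p ∣ n then (mySigma (k - 1) (n / p) : ℤ) else 0)

lemma sum_filter_dvd (m p N : ℕ) (hp : 0 < p) (hN : N ≠ 0) (hpN : p ∣ N) :
    ∑ d ∈ N.divisors.filter (fun d => p ∣ d), d ^ m = p ^ m * mySigma m (N / p) := by
  rw [mySigma, Finset.mul_sum]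
  have hNp : N / p ≠ 0 := (Nat.div_pos (Nat.le_of_dvd (Nat.pos_of_ne_zero hN) hpN) hp).ne'
  refine Finset.sum_nbij' (i := fun d => d / p) (j := fun e => p * e) ?_ ?_ ?_ ?_ ?_
  · intro d hd
    simp only [Finset.mem_filter, Nat.mem_divisors] at hd
    simp only [Nat.mem_divisors]
    exact ⟨(Nat.dvd_div_iff_mul_dvd hpN).mpr (by
      obtain ⟨e, rfl⟩ := hd.2
      rw [Nat.mul_div_cancel_left _ hp]
      exact hd.1.1), hNp⟩
  · intro e he
    simp only [Nat.mem_divisors] at he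
    simp only [Finset.mem_filter, Nat.mem_divisors]
    refine ⟨⟨?_, hN⟩, Dvd.intro e rfl⟩
    calc p * e ∣ p * (N / p) := mul_dvd_mul_left p he.1
      _ = N := Nat.mul_div_cancel' hpN
  · intro d hd
    simp only [Finset.mem_filter] at hd
    exact Nat.mul_div_cancel' hd.2
  · intro e _
    exact Nat.mul_div_cancel_left _ hp
  · intro d hd
    simp only [Finset.mem_filter] at hd
    conv_lhs => rw [← Nat.mul_div_cancel' hd.2]
    rw [mul_pow]

lemma key (m p n : ℕ) (hp : p.Prime) (hn : 0 < n) :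
    mySigma m (n * p) + p ^ m * (if p ∣ n then mySigma m (n / p) else 0)
      = (1 + p ^ m) * mySigma m n := by
  have hnp : n * p ≠ 0 := Nat.mul_ne_zero hn.ne' hp.pos.ne'
  have h1 : mySigma m (n * p) =
      ∑ d ∈ (n * p).divisors.filter (fun d => p ∣ d), d ^ m +
      ∑ d ∈ (n * p).divisors.filter (fun d => ¬ p ∣ d), d ^ m :=
    (Finset.sum_filter_add_sum_filter_not _ _ _).symm
  have h2 : (n * p).divisors.filter (fun d => ¬ p ∣ d)
      = n.divisors.filter (fun d => ¬ p ∣ d) := by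
    ext d
    simp only [Finset.mem_filter, Nat.mem_divisors]
    constructor
    · rintro ⟨⟨hd, _⟩, hpd⟩
      exact ⟨⟨(Nat.Coprime.dvd_of_dvd_mul_right
        ((hp.coprime_iff_not_dvd.mpr hpd).symm) hd), hn.ne'⟩, hpd⟩
    · rintro ⟨⟨hd, _⟩, hpd⟩
      exact ⟨⟨hd.mul_right p, hnp⟩, hpd⟩
  have h3 : ∑ d ∈ (n * p).divisors.filter (fun d => p ∣ d), d ^ m
      = p ^ m * mySigma m n := by
    rw [sum_filter_dvd m p (n * p) hp.pos hnp (Dvd.intro_left n rfl),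
      Nat.mul_div_cancel _ hp.pos]
  have h4 : ∑ d ∈ n.divisors.filter (fun d => p ∣ d), d ^ m
      = if p ∣ n then p ^ m * mySigma m (n / p) else 0 := by
    by_cases hpn : p ∣ n
    · rw [if_pos hpn, sum_filter_dvd m p n hp.pos hn.ne' hpn]
    · rw [if_neg hpn]
      apply Finset.sum_eq_zero
      intro d hd
      simp only [Finset.mem_filter, Nat.mem_divisors] at hd
      exact absurd (hd.2.trans hd.1.1) hpn
  have h5 : mySigma m n =
      ∑ d ∈ n.divisors.filter (fun d => p ∣ d), d ^ m +
      ∑ d ∈ n.divisors.filter (fun d => ¬ p ∣ d), d ^ m :=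
    (Finset.sum_filter_add_sum_filter_not _ _ _).symm
  rw [h1, h2, h3, h5, h4]
  by_cases hpn : p ∣ n <;> simp [hpn] <;> ring

theorem stmt7 (k p ℓ : ℕ) (hk : 4 ≤ k) (hke : Even k) (hp : p.Prime) (hℓ : ℓ.Prime)
    (ε : ℤ) (hε : ε = 1 ∨ ε = -1)
    (hdvd : (ℓ : ℤ) ∣ (ε + (p : ℤ) ^ (k / 2)) * (ε + (p : ℤ) ^ (k / 2 - 1))) :
    ∀ n : ℕ, 0 < n →
      frak k p ε (n * p) ≡
        (1 + (p : ℤ) ^ (k - 1) + ε * (p : ℤ) ^ (k / 2)) * frak k p ε n [ZMOD (ℓ : ℤ)] := by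
  intro n hn
  obtain ⟨h, rfl⟩ : ∃ h, k = 2 * h := hke.exists_two_nsmul k
  obtain ⟨a, rfl⟩ : ∃ a, h = a + 1 := ⟨h - 1, by omega⟩
  have e1 : 2 * (a + 1) - 1 = 2 * a + 1 := by omega
  have e2 : 2 * (a + 1) / 2 = a + 1 := by omega
  have e3 : 2 * (a + 1) / 2 - 1 = a := by omega
  rw [e2] at hdvd
  rw [show a + 1 - 1 = a from rfl] at hdvd
  simp only [frak, e1, e2, e3]
  have hkey := key (2 * a + 1) p n hp hn
  have hpdvd : p ∣ n * p := Dvd.intro_left n rfl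
  rw [if_pos hpdvd, Nat.mul_div_cancel _ hp.pos]
  have hkeyZ : (mySigma (2 * a + 1) (n * p) : ℤ)
      + (p : ℤ) ^ (2 * a + 1) * (if p ∣ n then (mySigma (2 * a + 1) (n / p) : ℤ) else 0)
      = (1 + (p : ℤ) ^ (2 * a + 1)) * (mySigma (2 * a + 1) n : ℤ) := by
    by_cases hpn : p ∣ n
    · simp only [if_pos hpn] at hkey ⊢; exact_mod_cast hkey
    · simp only [if_neg hpn, mul_zero, add_zero, Nat.mul_zero, Nat.add_zero] at hkey ⊢
      exact_mod_cast hkey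
  have hε2 : ε * ε = 1 := by rcases hε with rfl | rfl <;> ring
  rw [Int.modEq_iff_dvd]
  by_cases hpn : p ∣ n
  · rw [if_pos hpn] at *
    have expand : (mySigma (2*a+1) (n*p) : ℤ) + ε * (p:ℤ)^(a+1) * (mySigma (2*a+1) n : ℤ)
        - (1 + (p:ℤ)^(2*a+1) + ε * (p:ℤ)^(a+1)) *
          ((mySigma (2*a+1) n : ℤ) + ε * (p:ℤ)^(a+1) * (mySigma (2*a+1) (n/p) : ℤ))
        = -((mySigma (2*a+1) (n/p) : ℤ) * (ε * (p:ℤ)^(a+1)) *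
            ((ε + (p:ℤ)^(a+1)) * (ε + (p:ℤ)^a))) := by
      have : (mySigma (2*a+1) (n*p) : ℤ) = (1 + (p:ℤ)^(2*a+1)) * (mySigma (2*a+1) n : ℤ)
          - (p:ℤ)^(2*a+1) * (mySigma (2*a+1) (n/p) : ℤ) := by linarith [hkeyZ]
      rw [this]
      linear_combination ((p:ℤ) ^ (a+1) * (mySigma (2*a+1) (n/p) : ℤ) * ((p:ℤ) ^ a + ε)) * hε2
    rw [show ∀ x y : ℤ, x - y = -(y - x) from fun x y => by ring, expand, neg_neg]
    exact hdvd.mul_left _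
  · rw [if_neg hpn] at *
    simp only [mul_zero, add_zero] at hkeyZ ⊢
    rw [hkeyZ]
    exact ⟨0, by ring⟩
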